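/- Let n ≥ 1 and let x_1 ≥ x_2 ≥ ⋯ ≥ x_n be real numbers. A point (t_1,…,t_n) ∈ ℝ^n belongs to the permutohedron P_n(x_1,…,x_n) if and only if t_1 + ⋯ + t_n = x_1 + ⋯ + x_n and, for every nonempty subset S ⊆ [n], one has Σ_{i ∈ S} t_i ≤ x_1 + x_2 + ⋯ + x_{|S|}. -/
import Mathlib

open Finset

variable {n : ℕ}

/-- prefix set of length k -/
def pfx (n k : ℕ) : Finset (Fin n) := Finset.univ.filter (fun i : Fin n => (i : ℕ) < k)

lemma strictMono_fin_le {k m : ℕ} {f : Fin k → Fin m} (hf : StrictMono f) (j : Fin k) :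
    (j : ℕ) ≤ (f j : ℕ) := by
  have H : ∀ a : ℕ, ∀ j : Fin k, (j : ℕ) = a → a ≤ (f j : ℕ) := by
    intro a
    induction a with
    | zero => omega
    | succ a ih =>
      intro j hj
      have hm : a < k := by omega
      have h1 := ih ⟨a, hm⟩ rfl
      have h2 : f ⟨a, hm⟩ < f j := hf (by simp [Fin.lt_def]; omega)
      rw [Fin.lt_def] at h2
      omega
  exact H _ j rfl

/-- key "top-k" lemma -/
lemma sum_le_top (x : Fin n → ℝ) (hx : Antitone x) (T : Finset (Fin n)) :
    ∑ i ∈ T, x i ≤ ∑ i ∈ pfx n T.card, x i := by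
  have hk : T.card ≤ n := by
    simpa using Finset.card_le_card (Finset.subset_univ T)
  set k := T.card with hkdef
  have e := T.orderEmbOfFin (rfl : T.card = k)
  have hT : T = Finset.univ.map ⟨⇑(T.orderEmbOfFin rfl), (T.orderEmbOfFin rfl).injective⟩ := by
    ext a
    simp only [Finset.mem_map, Finset.mem_univ, true_and, Function.Embedding.coeFn_mk]
    constructor
    · intro ha
      have : a ∈ Set.range ⇑(T.orderEmbOfFin rfl) := by
        rw [Finset.range_orderEmbOfFin]; exact ha
      obtain ⟨j, hj⟩ := this
      exact ⟨j, hj⟩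
    · rintro ⟨j, rfl⟩
      exact Finset.orderEmbOfFin_mem T rfl j
  have hP : pfx n k = Finset.univ.map ⟨⇑(Fin.castLEEmb hk), (Fin.castLEEmb hk).injective⟩ := by
    ext a
    simp only [pfx, Finset.mem_filter, Finset.mem_univ, true_and, Finset.mem_map,
      Function.Embedding.coeFn_mk]
    constructor
    · intro ha
      exact ⟨⟨(a : ℕ), ha⟩, by ext; simp⟩
    · rintro ⟨j, rfl⟩
      simpa using j.isLt
  rw [hT, hP, Finset.sum_map, Finset.sum_map]
  apply Finset.sum_le_sum
  intro j _
  apply hx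
  rw [Fin.le_def]
  simpa using strictMono_fin_le (T.orderEmbOfFin rfl).strictMono j

/-- set of permutations of x -/
def pset (n : ℕ) (x : Fin n → ℝ) : Set (Fin n → ℝ) :=
  {p | ∃ w : Equiv.Perm (Fin n), p = fun i => x (w i)}

lemma keyB (t : Fin n → ℝ) (ht : Antitone t) :
    ∀ d (x : Fin n → ℝ), Antitone x →
    (∀ m, ∑ i ∈ pfx n m, t i ≤ ∑ i ∈ pfx n m, x i) →
    (∑ i, t i = ∑ i, x i) →
    (Finset.univ.filter (fun i => t i ≠ x i)).card = d →
    t ∈ convexHull ℝ (pset n x) := by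
  intro d
  induction d using Nat.strong_induction_on with
  | _ d ih =>
  intro x hx hmaj hsum hd
  rcases Finset.eq_empty_or_nonempty (Finset.univ.filter (fun i => t i ≠ x i)) with hD | hD
  · -- t = x
    have : t = x := by
      funext i
      by_contra hne
      have : i ∈ Finset.univ.filter (fun i => t i ≠ x i) := by simp [hne]
      simp [hD] at this
    apply subset_convexHull
    exact ⟨1, by simp [this]⟩
  · -- choose j
    have hJne : (Finset.univ.filter (fun i => t i < x i)).Nonempty := by
      by_contra hJ
      rw [Finset.not_nonempty_iff_eq_empty] at hJ
      have hle : ∀ i, x i ≤ t i := by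
        intro i
        by_contra h
        have : i ∈ Finset.univ.filter (fun i => t i < x i) := by
          simp; linarith
        simp [hJ] at this
      obtain ⟨i0, hi0⟩ := hD
      simp only [Finset.mem_filter, Finset.mem_univ, true_and] at hi0
      have : ∑ i, x i < ∑ i, t i :=
        Finset.sum_lt_sum (fun i _ => hle i) ⟨i0, Finset.mem_univ _, (hle i0).lt_of_ne (Ne.symm hi0)⟩
      linarith
    set j := (Finset.univ.filter (fun i => t i < x i)).max' hJne with hjdef
    have hj : t j < x j := by
      have := (Finset.univ.filter (fun i => t i < x i)).max'_mem hJne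
      simpa using this
    have hjmax : ∀ i, t i < x i → i ≤ j := by
      intro i hi
      exact Finset.le_max' _ i (by simpa using hi)
    -- choose k
    have hKne : (Finset.univ.filter (fun i => j < i ∧ x i < t i)).Nonempty := by
      by_contra hK
      rw [Finset.not_nonempty_iff_eq_empty] at hK
      have heq : ∀ i, j < i → t i = x i := by
        intro i hji
        have h1 : ¬ x i < t i := by
          intro h
          have : i ∈ Finset.univ.filter (fun i => j < i ∧ x i < t i) := by simp [hji, h]
          simp [hK] at this
        have h2 : ¬ t i < x i := fun h => absurd (hjmax i h) (not_le.2 hji)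
        linarith
      -- split univ into pfx (j+1) and rest
      have hsplit : ∀ a : Fin n → ℝ,
          ∑ i, a i = ∑ i ∈ pfx n ((j:ℕ)+1), a i + ∑ i ∈ Finset.univ.filter (fun i : Fin n => (j:ℕ) < (i:ℕ)), a i := by
        intro a
        rw [← Finset.sum_union]
        · apply Finset.sum_congr _ (fun _ _ => rfl)
          ext i
          simp [pfx]
          omega
        · rw [Finset.disjoint_left]
          intro i hi hi'
          simp [pfx] at hi hi'
          omega
      have hrest : ∑ i ∈ Finset.univ.filter (fun i : Fin n => (j:ℕ) < (i:ℕ)), t i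
          = ∑ i ∈ Finset.univ.filter (fun i : Fin n => (j:ℕ) < (i:ℕ)), x i := by
        apply Finset.sum_congr rfl
        intro i hi
        simp only [Finset.mem_filter] at hi
        exact heq i (by rw [Fin.lt_def]; exact hi.2)
      have h1 : ∑ i ∈ pfx n ((j:ℕ)+1), t i = ∑ i ∈ pfx n ((j:ℕ)+1), x i := by
        have e1 := hsplit t
        have e2 := hsplit x
        rw [hsum] at *
        linarith
      -- but prefix j gives strict inequality
      have hins : pfx n ((j:ℕ)+1) = insert j (pfx n (j:ℕ)) := by
        ext i
        simp [pfx, Fin.ext_iff]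
        omega
      have hnotmem : j ∉ pfx n (j:ℕ) := by simp [pfx]
      rw [hins, Finset.sum_insert hnotmem, Finset.sum_insert hnotmem] at h1
      have := hmaj (j:ℕ)
      linarith
    set k := (Finset.univ.filter (fun i => j < i ∧ x i < t i)).min' hKne with hkdef
    have hkmem := (Finset.univ.filter (fun i => j < i ∧ x i < t i)).min'_mem hKne
    simp only [Finset.mem_filter, Finset.mem_univ, true_and] at hkmem
    obtain ⟨hjk, hk⟩ := hkmem
    have hkmin : ∀ i, j < i → x i < t i → k ≤ i := by
      intro i h1 h2
      exact Finset.min'_le _ i (by simp [h1, h2])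
    have hmid : ∀ i, j < i → i < k → t i = x i := by
      intro i h1 h2
      have ha : ¬ t i < x i := fun h => absurd (hjmax i h) (not_le.2 h1)
      have hb : ¬ x i < t i := fun h => absurd (hkmin i h1 h) (not_le.2 h2)
      linarith
    -- basic facts
    have hjklt : j < k := hjk
    have hjkne : j ≠ k := ne_of_lt hjklt
    have htjk : t k ≤ t j := ht (le_of_lt hjklt)
    have hxjk : x k < x j := by linarith
    -- the transform
    set δ : ℝ := min (x j - t j) (t k - x k) with hδdef
    have hδpos : 0 < δ := by
      apply lt_min <;> linarith
    have hδ1 : δ ≤ x j - t j := min_le_left _ _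
    have hδ2 : δ ≤ t k - x k := min_le_right _ _
    set x' : Fin n → ℝ := Function.update (Function.update x j (x j - δ)) k (x k + δ)
      with hx'def
    have hx'j : x' j = x j - δ := by
      rw [hx'def, Function.update_of_ne hjkne, Function.update_self]
    have hx'k : x' k = x k + δ := by
      rw [hx'def, Function.update_self]
    have hx'o : ∀ i, i ≠ j → i ≠ k → x' i = x i := by
      intro i h1 h2
      rw [hx'def, Function.update_of_ne h2, Function.update_of_ne h1]
    -- x' is antitone
    have hx' : Antitone x' := by
      intro a b hab
      rcases eq_or_ne a j with rfl | haj
      · rcases eq_or_ne b j with rfl | hbj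
        · exact le_refl _
        rcases eq_or_ne b k with rfl | hbk
        · rw [hx'j, hx'k]; linarith
        · have hjb : j < b := lt_of_le_of_ne hab (Ne.symm hbj)
          rw [hx'o b hbj hbk, hx'j]
          rcases lt_trichotomy b k with h | rfl | h
          · have := hmid b hjb h
            have := ht (le_of_lt hjb)
            linarith
          · exact absurd rfl hbk
          · have := hx (le_of_lt h)
            linarith
      rcases eq_or_ne a k with rfl | hak
      · rcases eq_or_ne b k with rfl | hbk
        · exact le_refl _
        · have hbj : b ≠ j := by
            intro h; subst h; exact absurd (lt_of_lt_of_le hjklt hab) (lt_irrefl _)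
          have hkb : k < b := lt_of_le_of_ne hab (Ne.symm hbk)
          rw [hx'o b hbj hbk, hx'k]
          have := hx (le_of_lt hkb)
          linarith
      · -- a ≠ j, a ≠ k
        rcases eq_or_ne b j with rfl | hbj
        · have haj' : a < j := lt_of_le_of_ne hab haj
          rw [hx'o a haj hak, hx'j]
          have := hx (le_of_lt haj')
          linarith
        rcases eq_or_ne b k with rfl | hbk
        · have hak' : a < k := lt_of_le_of_ne hab hak
          rw [hx'o a haj hak, hx'k]
          rcases lt_trichotomy a j with h | rfl | h
          · have := hx (le_of_lt h)
            linarith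
          · exact absurd rfl haj
          · have := hmid a h hak'
            have := ht (le_of_lt hak')
            linarith
        · rw [hx'o a haj hak, hx'o b hbj hbk]
          exact hx hab
    -- sums over prefixes
    have hjmem : ∀ m : ℕ, (j:ℕ) < m → j ∈ pfx n m := by
      intro m hm; simp [pfx, hm]
    have hsub : ∀ (s : Finset (Fin n)), ∑ i ∈ s, x' i - ∑ i ∈ s, x i = ∑ i ∈ s, (x' i - x i) := by
      intro s; rw [Finset.sum_sub_distrib]
    have hx'sum : ∀ (s : Finset (Fin n)), j ∈ s → k ∈ s →
        ∑ i ∈ s, x' i = ∑ i ∈ s, x i := by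
      intro s hjs hks
      have h1 : ∑ i ∈ ({j, k} : Finset (Fin n)), (x' i - x i) = ∑ i ∈ s, (x' i - x i) := by
        apply Finset.sum_subset
        · intro i hi
          simp only [Finset.mem_insert, Finset.mem_singleton] at hi
          rcases hi with rfl | rfl <;> assumption
        · intro i _ hi
          simp only [Finset.mem_insert, Finset.mem_singleton] at hi
          push_neg at hi
          rw [hx'o i hi.1 hi.2]; ring
      rw [Finset.sum_pair hjkne, hx'j, hx'k] at h1
      have := hsub s
      linarith
    have hx'sumj : ∀ (s : Finset (Fin n)), j ∈ s → k ∉ s →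
        ∑ i ∈ s, x' i = ∑ i ∈ s, x i - δ := by
      intro s hjs hks
      have h1 : ∑ i ∈ ({j} : Finset (Fin n)), (x' i - x i) = ∑ i ∈ s, (x' i - x i) := by
        apply Finset.sum_subset
        · intro i hi
          simp only [Finset.mem_singleton] at hi
          subst hi; exact hjs
        · intro i hi' hi
          simp only [Finset.mem_singleton] at hi
          rw [hx'o i hi (by rintro rfl; exact hks hi')]; ring
      rw [Finset.sum_singleton, hx'j] at h1
      have := hsub s
      linarith
    have hx'none : ∀ (s : Finset (Fin n)), j ∉ s → k ∉ s →
        ∑ i ∈ s, x' i = ∑ i ∈ s, x i := by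
      intro s hjs hks
      exact Finset.sum_congr rfl (fun i hi =>
        hx'o i (by rintro rfl; exact hjs hi) (by rintro rfl; exact hks hi))
    -- new total sum
    have hsum' : ∑ i, t i = ∑ i, x' i := by
      rw [hx'sum Finset.univ (Finset.mem_univ _) (Finset.mem_univ _)]
      exact hsum
    -- new majorization
    have hmaj' : ∀ m, ∑ i ∈ pfx n m, t i ≤ ∑ i ∈ pfx n m, x' i := by
      intro m
      by_cases hjm : (j:ℕ) < m
      · by_cases hkm : (k:ℕ) < m
        · rw [hx'sum (pfx n m) (by simp [pfx, hjm]) (by simp [pfx, hkm])]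
          exact hmaj m
        · rw [hx'sumj (pfx n m) (by simp [pfx, hjm]) (by simp [pfx, hkm])]
          -- split prefix
          have hsplit2 : ∀ a : Fin n → ℝ, ∑ i ∈ pfx n m, a i
              = ∑ i ∈ pfx n (j:ℕ), a i + (a j
              + ∑ i ∈ Finset.univ.filter (fun i : Fin n => (j:ℕ) < (i:ℕ) ∧ (i:ℕ) < m), a i) := by
            intro a
            have hun : pfx n m = pfx n (j:ℕ)
                ∪ insert j (Finset.univ.filter (fun i : Fin n => (j:ℕ) < (i:ℕ) ∧ (i:ℕ) < m)) := by
              ext i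
              simp [pfx, Fin.ext_iff]
              omega
            have hdisj : Disjoint (pfx n (j:ℕ))
                (insert j (Finset.univ.filter (fun i : Fin n => (j:ℕ) < (i:ℕ) ∧ (i:ℕ) < m))) := by
              rw [Finset.disjoint_left]
              intro i hi hi'
              simp [pfx] at hi
              simp [Fin.ext_iff] at hi'
              omega
            have hjnm : j ∉ Finset.univ.filter (fun i : Fin n => (j:ℕ) < (i:ℕ) ∧ (i:ℕ) < m) := by
              simp
            rw [hun, Finset.sum_union hdisj, Finset.sum_insert hjnm]
          rw [hsplit2 t, hsplit2 x]
          have hmidsum : ∑ i ∈ Finset.univ.filter (fun i : Fin n => (j:ℕ) < (i:ℕ) ∧ (i:ℕ) < m), t i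
              = ∑ i ∈ Finset.univ.filter (fun i : Fin n => (j:ℕ) < (i:ℕ) ∧ (i:ℕ) < m), x i := by
            apply Finset.sum_congr rfl
            intro i hi
            simp only [Finset.mem_filter, Finset.mem_univ, true_and] at hi
            refine hmid i ?_ ?_
            · rw [Fin.lt_def]; exact hi.1
            · rw [Fin.lt_def]; push_neg at hkm; omega
          have := hmaj (j:ℕ)
          rw [hmidsum]
          linarith
      · have hkm : ¬ ((k:ℕ) < m) := by
          have : (j:ℕ) < (k:ℕ) := hjklt
          omega
        rw [hx'none (pfx n m) (by simp [pfx, hjm]) (by simp [pfx, hkm])]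
        exact hmaj m
    -- mismatch count decreases
    have hjD : j ∈ Finset.univ.filter (fun i => t i ≠ x i) := by
      simp only [Finset.mem_filter, Finset.mem_univ, true_and]
      exact ne_of_lt hj
    have hkD : k ∈ Finset.univ.filter (fun i => t i ≠ x i) := by
      simp only [Finset.mem_filter, Finset.mem_univ, true_and]
      exact ne_of_gt hk
    have hcard : (Finset.univ.filter (fun i => t i ≠ x' i)).card < d := by
      rcases le_total (x j - t j) (t k - x k) with hmin | hmin
      · have hδeq : δ = x j - t j := min_eq_left hmin
        have hsubD : Finset.univ.filter (fun i => t i ≠ x' i)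
            ⊆ (Finset.univ.filter (fun i => t i ≠ x i)).erase j := by
          intro i hi
          simp only [Finset.mem_filter, Finset.mem_univ, true_and] at hi
          rw [Finset.mem_erase]
          constructor
          · rintro rfl
            rw [hx'j, hδeq] at hi
            simp at hi
          · simp only [Finset.mem_filter, Finset.mem_univ, true_and]
            rcases eq_or_ne i j with rfl | hij
            · exact ne_of_lt hj
            rcases eq_or_ne i k with rfl | hik
            · exact ne_of_gt hk
            · rwa [hx'o i hij hik] at hi
        calc (Finset.univ.filter (fun i => t i ≠ x' i)).card
            ≤ ((Finset.univ.filter (fun i => t i ≠ x i)).erase j).card :=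
              Finset.card_le_card hsubD
          _ < (Finset.univ.filter (fun i => t i ≠ x i)).card :=
              Finset.card_erase_lt_of_mem hjD
          _ = d := hd
      · have hδeq : δ = t k - x k := min_eq_right hmin
        have hsubD : Finset.univ.filter (fun i => t i ≠ x' i)
            ⊆ (Finset.univ.filter (fun i => t i ≠ x i)).erase k := by
          intro i hi
          simp only [Finset.mem_filter, Finset.mem_univ, true_and] at hi
          rw [Finset.mem_erase]
          constructor
          · rintro rfl
            rw [hx'k, hδeq] at hi
            simp at hi
          · simp only [Finset.mem_filter, Finset.mem_univ, true_and]
            rcases eq_or_ne i j with rfl | hij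
            · exact ne_of_lt hj
            rcases eq_or_ne i k with rfl | hik
            · exact ne_of_gt hk
            · rwa [hx'o i hij hik] at hi
        calc (Finset.univ.filter (fun i => t i ≠ x' i)).card
            ≤ ((Finset.univ.filter (fun i => t i ≠ x i)).erase k).card :=
              Finset.card_le_card hsubD
          _ < (Finset.univ.filter (fun i => t i ≠ x i)).card :=
              Finset.card_erase_lt_of_mem hkD
          _ = d := hd
    -- apply the induction hypothesis
    have htx' : t ∈ convexHull ℝ (pset n x') :=
      ih _ hcard x' hx' hmaj' hsum' rfl
    -- x' permutations lie in the hull of x permutations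
    set lam : ℝ := δ / (x j - x k) with hlamdef
    have hxjk' : (0:ℝ) < x j - x k := by linarith
    have hl0 : 0 ≤ lam := div_nonneg (le_of_lt hδpos) (le_of_lt hxjk')
    have hl1 : lam ≤ 1 := by
      rw [hlamdef, div_le_one hxjk']
      linarith
    have hlδ : lam * (x j - x k) = δ := div_mul_cancel₀ _ (ne_of_gt hxjk')
    have hcomb : ∀ i, x' i = (1 - lam) * x i + lam * x (Equiv.swap j k i) := by
      intro i
      rcases eq_or_ne i j with rfl | hij
      · rw [hx'j, Equiv.swap_apply_left]
        nlinarith [hlδ]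
      rcases eq_or_ne i k with rfl | hik
      · rw [hx'k, Equiv.swap_apply_right]
        nlinarith [hlδ]
      · rw [hx'o i hij hik, Equiv.swap_apply_of_ne_of_ne hij hik]
        ring
    have hpsub : pset n x' ⊆ convexHull ℝ (pset n x) := by
      rintro p ⟨w, rfl⟩
      have heqp : (fun i => x' (w i))
          = (1 - lam) • (fun i => x (w i)) + lam • (fun i => x ((Equiv.swap j k * w) i)) := by
        funext i
        simp only [Pi.add_apply, Pi.smul_apply, smul_eq_mul, Equiv.Perm.mul_apply]
        exact hcomb (w i)
      rw [heqp]
      exact (convex_convexHull ℝ (pset n x))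
        (subset_convexHull ℝ _ ⟨w, rfl⟩)
        (subset_convexHull ℝ _ ⟨Equiv.swap j k * w, rfl⟩)
        (by linarith) hl0 (by ring)
    exact convexHull_min hpsub (convex_convexHull ℝ _) htx'

/-- The permutohedron `P_m(x_1,…,x_m)`. -/
def permutohedron (m : ℕ) (x : Fin m → ℝ) : Set (Fin m → ℝ) :=
  convexHull ℝ {p | ∃ w : Equiv.Perm (Fin m), p = fun i => x (w i)}

theorem stmt6 (n : ℕ) (hn : 1 ≤ n) (x : Fin n → ℝ) (hx : Antitone x) (t : Fin n → ℝ) :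
    t ∈ permutohedron n x ↔
      (∑ i, t i = ∑ i, x i ∧
        ∀ S : Finset (Fin n), S.Nonempty →
          ∑ i ∈ S, t i ≤ ∑ i ∈ Finset.univ.filter (fun i : Fin n => (i : ℕ) < S.card), x i) := by
  constructor
  · -- forward direction
    intro ht
    have hC : t ∈ {p : Fin n → ℝ | ∑ i, p i = ∑ i, x i ∧
        ∀ S : Finset (Fin n), ∑ i ∈ S, p i ≤ ∑ i ∈ pfx n S.card, x i} := by
      refine convexHull_min ?_ ?_ ht
      · rintro p ⟨w, rfl⟩
        constructor
        · exact Equiv.sum_comp w x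
        · intro S
          have himg : ∑ i ∈ S, x (w i) = ∑ i ∈ S.image w, x i :=
            (Finset.sum_image (fun a _ b _ h => w.injective h)).symm
          rw [himg]
          have hcard : (S.image w).card = S.card := Finset.card_image_of_injective S w.injective
          have := sum_le_top x hx (S.image w)
          rwa [hcard] at this
      · intro p hp q hq a b ha hb hab
        simp only [Set.mem_setOf_eq] at hp hq ⊢
        constructor
        · have : ∑ i, (a • p + b • q) i = a * ∑ i, p i + b * ∑ i, q i := by
            simp [Finset.sum_add_distrib, Finset.mul_sum]
          rw [this, hp.1, hq.1]
          linear_combination (∑ i, x i) * hab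
        · intro S
          have : ∑ i ∈ S, (a • p + b • q) i = a * ∑ i ∈ S, p i + b * ∑ i ∈ S, q i := by
            simp [Finset.sum_add_distrib, Finset.mul_sum]
          rw [this]
          have h1 := hp.2 S
          have h2 := hq.2 S
          calc a * ∑ i ∈ S, p i + b * ∑ i ∈ S, q i
              ≤ a * ∑ i ∈ pfx n S.card, x i + b * ∑ i ∈ pfx n S.card, x i :=
                add_le_add (mul_le_mul_of_nonneg_left h1 ha) (mul_le_mul_of_nonneg_left h2 hb)
            _ = ∑ i ∈ pfx n S.card, x i := by rw [← add_mul, hab, one_mul]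
    exact ⟨hC.1, fun S _ => hC.2 S⟩
  · -- backward direction
    rintro ⟨hsum, hS⟩
    -- sort t
    set σ : Equiv.Perm (Fin n) := Tuple.sort (fun i => -t i) with hσdef
    set u : Fin n → ℝ := t ∘ σ with hudef
    have hu : Antitone u := by
      intro a b hab
      have := Tuple.monotone_sort (fun i => -t i) hab
      simpa [hudef] using this
    have husum : ∑ i, u i = ∑ i, t i := Equiv.sum_comp σ t
    have humaj : ∀ m, ∑ i ∈ pfx n m, u i ≤ ∑ i ∈ pfx n m, x i := by
      intro m
      rcases Nat.eq_zero_or_pos m with rfl | hm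
      · simp [pfx]
      by_cases hmn : m ≤ n
      · have himg : ∑ i ∈ pfx n m, u i = ∑ i ∈ (pfx n m).image σ, t i :=
          (Finset.sum_image (fun a _ b _ h => σ.injective h)).symm
        have hcard : ((pfx n m).image σ).card = m := by
          rw [Finset.card_image_of_injective _ σ.injective]
          have : pfx n m = (Finset.range m).attachFin
              (fun a ha => lt_of_lt_of_le (Finset.mem_range.1 ha) hmn) := by
            ext i
            simp [pfx, Finset.mem_attachFin]
          rw [this, Finset.card_attachFin, Finset.card_range]
        have hne : ((pfx n m).image σ).Nonempty := by
          rw [← Finset.card_pos, hcard]; exact hm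
        have := hS _ hne
        rw [hcard] at this
        rw [himg]
        exact this.trans (le_of_eq rfl)
      · -- m > n : full sums
        push_neg at hmn
        have hfull : pfx n m = Finset.univ := by
          ext i; simp [pfx]; omega
        rw [hfull, husum, hsum]
    have hukey : u ∈ convexHull ℝ (pset n x) :=
      keyB u hu _ x hx humaj (by rw [husum, hsum]) rfl
    -- transfer back via σ⁻¹
    have hL : t ∈ (LinearMap.funLeft ℝ ℝ ⇑σ⁻¹) '' (convexHull ℝ (pset n x)) := by
      refine ⟨u, hukey, ?_⟩
      funext i
      simp [LinearMap.funLeft_apply, hudef]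
    rw [LinearMap.image_convexHull] at hL
    have hsub : (LinearMap.funLeft ℝ ℝ ⇑σ⁻¹) '' (pset n x) ⊆ pset n x := by
      rintro p ⟨q, ⟨w, rfl⟩, rfl⟩
      refine ⟨w * σ⁻¹, ?_⟩
      funext i
      simp [LinearMap.funLeft_apply, Equiv.Perm.mul_apply]
    exact convexHull_mono hsub hL
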